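/- arXiv:2108.02609 — 3 statements merged into one kernel-verified Lean document; each statement's English description precedes it below -/
import Mathlib

section
/- Let ν ∈ 𝒫₂(ℝ^d) and K ⊂ ℝ^d compact. Then the map μ ↦ W₂²(μ, ν) is strongly semiconcave with constant 1 on 𝒫(K): for all μ₁, μ₂ ∈ 𝒫(K), every coupling 𝛍 ∈ Γ(μ₁, μ₂), and every λ ∈ [0,1], defining the interpolation 𝛍^{1→2}_λ := ((1-λ)π¹ + λπ²)_#𝛍, one has (1-λ)·W₂²(μ₁,ν) + λ·W₂²(μ₂,ν) - W₂²(𝛍^{1→2}_λ, ν) ≤ λ(1-λ)·W_{2,𝛍}²(μ₁,μ₂), where W_{2,𝛍}²(μ₁,μ₂) = ∫ |x-y|² d𝛍(x,y). -/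
open MeasureTheory Metric Set
open scoped ENNReal

/-- The set of transport plans (couplings) between two measures. -/
def Coupling {α : Type*} [MeasurableSpace α] (μ ν : MeasureTheory.Measure α) :
    Set (MeasureTheory.Measure (α × α)) :=
  {γ | γ.map Prod.fst = μ ∧ γ.map Prod.snd = ν}

/-- The `p`-Wasserstein distance, defined as the infimum over transport plans of the
`p`-th root of the `p`-cost. -/
noncomputable def wassersteinDist {d : ℕ} (p : ℝ)
    (μ ν : MeasureTheory.Measure (EuclideanSpace ℝ (Fin d))) : ℝ≥0∞ :=
  ⨅ γ ∈ Coupling μ ν, (∫⁻ z, (edist z.1 z.2) ^ p ∂γ) ^ (1 / p)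

namespace StmtAux

open ProbabilityTheory

variable {α β Ω : Type*} [MeasurableSpace α] [MeasurableSpace β] [MeasurableSpace Ω]

lemma map_compProd_comap (μ : Measure α) [SFinite μ] {g : α → β} (hg : Measurable g)
    (κ : Kernel β Ω) [IsSFiniteKernel κ] :
    ((μ ⊗ₘ (κ.comap g hg)).map (Prod.map g id)) = (μ.map g) ⊗ₘ κ := by
  ext s hs
  rw [Measure.map_apply (hg.prodMap measurable_id) hs,
    Measure.compProd_apply ((hg.prodMap measurable_id) hs),
    Measure.compProd_apply hs,
    lintegral_map (Kernel.measurable_kernel_prodMk_left hs) hg]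
  refine lintegral_congr fun a => ?_
  rw [Kernel.comap_apply]
  congr 1

lemma coupling_isProb {μ ν : Measure α} [IsProbabilityMeasure μ] {γ : Measure (α × α)}
    (hγ : γ ∈ Coupling μ ν) : IsProbabilityMeasure γ := by
  constructor
  have := congrArg (fun m : Measure α => m univ) hγ.1
  simpa [Measure.map_apply measurable_fst MeasurableSet.univ] using this

lemma sq_add_le (a b : ℝ≥0∞) : (a + b) ^ (2:ℝ) ≤ 4 * a ^ (2:ℝ) + 4 * b ^ (2:ℝ) := by
  have h2 : ∀ x : ℝ≥0∞, x ^ (2:ℝ) = x * x := by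
    intro x
    rw [show (2:ℝ) = ((2:ℕ):ℝ) by norm_num, ENNReal.rpow_natCast, sq]
  rw [h2, h2, h2]
  rcases le_total a b with h | h
  · calc (a+b)*(a+b) ≤ (b+b)*(b+b) := by gcongr
    _ = 4 * (b*b) := by ring
    _ ≤ 4*(a*a) + 4*(b*b) := le_add_self
  · calc (a+b)*(a+b) ≤ (a+a)*(a+a) := by gcongr
    _ = 4 * (a*a) := by ring
    _ ≤ 4*(a*a) + 4*(b*b) := le_self_add

lemma edist_sq {E : Type*} [NormedAddCommGroup E] [InnerProductSpace ℝ E] (a b : E) :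
    edist a b ^ (2:ℝ) = ENNReal.ofReal (‖a - b‖^2) := by
  rw [edist_dist, dist_eq_norm,
    ENNReal.ofReal_rpow_of_nonneg (norm_nonneg _) (by norm_num : (0:ℝ) ≤ 2)]
  rw [show ((2:ℝ)) = ((2:ℕ):ℝ) by norm_num, Real.rpow_natCast]

lemma interp_identity {E : Type*} [NormedAddCommGroup E] [InnerProductSpace ℝ E]
    (l : ℝ) (x y w : E) :
    (1-l) * ‖x-w‖^2 + l * ‖y-w‖^2
      = ‖((1-l)•x + l•y) - w‖^2 + l*(1-l) * ‖x-y‖^2 := by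
  have main : ∀ u v : E, (1-l)*‖u‖^2 + l*‖v‖^2
      = ‖(1-l)•u + l•v‖^2 + l*(1-l)*‖u-v‖^2 := by
    intro u v
    rw [norm_add_sq_real, norm_sub_sq_real, norm_smul, norm_smul,
      real_inner_smul_left, real_inner_smul_right]
    simp only [mul_pow, sq_abs, Real.norm_eq_abs]
    ring
  have h : ((1-l)•x + l•y) - w = (1-l)•(x-w) + l•(y-w) := by module
  have h2 : x - y = (x-w) - (y-w) := by abel
  rw [h, h2]
  exact main _ _

lemma enn_identity {E : Type*} [NormedAddCommGroup E] [InnerProductSpace ℝ E]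
    {l : ℝ} (hl0 : 0 ≤ l) (hl1 : l ≤ 1) (x y w : E) :
    ENNReal.ofReal (1-l) * edist x w ^ (2:ℝ) + ENNReal.ofReal l * edist y w ^ (2:ℝ)
      = edist ((1-l)•x + l•y) w ^ (2:ℝ)
        + ENNReal.ofReal (l*(1-l)) * edist x y ^ (2:ℝ) := by
  rw [edist_sq, edist_sq, edist_sq, edist_sq,
    ← ENNReal.ofReal_mul (by linarith), ← ENNReal.ofReal_mul hl0,
    ← ENNReal.ofReal_mul (mul_nonneg hl0 (by linarith)),
    ← ENNReal.ofReal_add (mul_nonneg (by linarith) (sq_nonneg _))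
        (mul_nonneg hl0 (sq_nonneg _)),
    ← ENNReal.ofReal_add (sq_nonneg _)
        (mul_nonneg (mul_nonneg hl0 (by linarith)) (sq_nonneg _)),
    interp_identity l x y w]

variable {d : ℕ}
local notation "X" => EuclideanSpace ℝ (Fin d)

noncomputable def cost (γ : Measure (X × X)) : ℝ≥0∞ := ∫⁻ z, edist z.1 z.2 ^ (2:ℝ) ∂γ

lemma measurable_cost_integrand :
    Measurable (fun z : X × X => edist z.1 z.2 ^ (2:ℝ)) :=
  (measurable_edist).pow_const _

noncomputable def A (μ ν : Measure X) : ℝ≥0∞ := ⨅ γ ∈ Coupling μ ν, cost γ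

noncomputable def mom2 (μ : Measure X) : ℝ≥0∞ := ∫⁻ x, (‖x‖₊ : ℝ≥0∞) ^ (2:ℝ) ∂μ

lemma mom2_lt_top {μ : Measure X} [IsProbabilityMeasure μ] {R : ℝ}
    (h : μ (closedBall 0 R)ᶜ = 0) : mom2 μ < ⊤ := by
  have hae : ∀ᵐ x ∂μ, x ∈ closedBall (0:X) R := by
    rw [ae_iff]
    exact h
  have hb : ∀ᵐ x ∂μ, (‖x‖₊ : ℝ≥0∞) ^ (2:ℝ) ≤ ENNReal.ofReal R ^ (2:ℝ) := by
    filter_upwards [hae] with x hx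
    refine ENNReal.rpow_le_rpow ?_ (by norm_num)
    rw [mem_closedBall_zero_iff] at hx
    calc (‖x‖₊ : ℝ≥0∞) = ENNReal.ofReal ‖x‖ := (ofReal_norm x).symm
    _ ≤ ENNReal.ofReal R := ENNReal.ofReal_le_ofReal hx
  calc mom2 μ ≤ ∫⁻ _, ENNReal.ofReal R ^ (2:ℝ) ∂μ := lintegral_mono_ae hb
  _ = ENNReal.ofReal R ^ (2:ℝ) := by simp
  _ < ⊤ := ENNReal.rpow_lt_top_of_nonneg (by norm_num) ENNReal.ofReal_ne_top

lemma cost_le_mom {μ ν : Measure X} (γ : Measure (X × X)) (hγ : γ ∈ Coupling μ ν) :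
    cost γ ≤ 4 * mom2 μ + 4 * mom2 ν := by
  have hpt : ∀ z : X × X, edist z.1 z.2 ^ (2:ℝ)
      ≤ 4 * (‖z.1‖₊ : ℝ≥0∞) ^ (2:ℝ) + 4 * (‖z.2‖₊ : ℝ≥0∞) ^ (2:ℝ) := by
    intro z
    refine le_trans (ENNReal.rpow_le_rpow ?_ (by norm_num)) (sq_add_le _ _)
    rw [edist_eq_enorm_sub]
    exact enorm_sub_le
  calc cost γ ≤ ∫⁻ z, (4 * (‖z.1‖₊ : ℝ≥0∞) ^ (2:ℝ) + 4 * (‖z.2‖₊ : ℝ≥0∞) ^ (2:ℝ)) ∂γ :=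
        lintegral_mono hpt
  _ = 4 * ∫⁻ z, (‖z.1‖₊ : ℝ≥0∞) ^ (2:ℝ) ∂γ + 4 * ∫⁻ z, (‖z.2‖₊ : ℝ≥0∞) ^ (2:ℝ) ∂γ := by
      rw [lintegral_add_left, lintegral_const_mul, lintegral_const_mul]
      · exact (measurable_nnnorm.comp measurable_snd).coe_nnreal_ennreal.pow_const _
      · exact (measurable_nnnorm.comp measurable_fst).coe_nnreal_ennreal.pow_const _
      · exact ((measurable_nnnorm.comp measurable_fst).coe_nnreal_ennreal.pow_const _).const_mul _
  _ = 4 * mom2 μ + 4 * mom2 ν := by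
      simp only [mom2]
      rw [← hγ.1, ← hγ.2, lintegral_map ?_ measurable_fst, lintegral_map ?_ measurable_snd]
      · exact measurable_nnnorm.coe_nnreal_ennreal.pow_const _
      · exact measurable_nnnorm.coe_nnreal_ennreal.pow_const _

lemma A_lt_top {μ ν : Measure X} [IsProbabilityMeasure μ] [IsProbabilityMeasure ν]
    (hμ : mom2 μ < ⊤) (hν : mom2 ν < ⊤) : A μ ν < ⊤ := by
  have hprod : μ.prod ν ∈ Coupling μ ν := ⟨Measure.fst_prod, Measure.snd_prod⟩
  calc A μ ν ≤ cost (μ.prod ν) := iInf₂_le _ hprod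
  _ ≤ 4 * mom2 μ + 4 * mom2 ν := cost_le_mom _ hprod
  _ < ⊤ := ENNReal.add_lt_top.2
      ⟨ENNReal.mul_lt_top (by norm_num) hμ, ENNReal.mul_lt_top (by norm_num) hν⟩

lemma wd_eq (μ ν : Measure X) : wassersteinDist 2 μ ν = (A μ ν) ^ ((1:ℝ)/2) := by
  rw [wassersteinDist, A]
  apply le_antisymm
  · have h : ((⨅ γ ∈ Coupling μ ν, (cost γ) ^ ((1:ℝ)/2)))^(2:ℝ)
        ≤ ⨅ γ ∈ Coupling μ ν, cost γ := by
      refine le_iInf₂ fun γ hγ => ?_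
      calc ((⨅ γ ∈ Coupling μ ν, (cost γ) ^ ((1:ℝ)/2)))^(2:ℝ)
          ≤ ((cost γ) ^ ((1:ℝ)/2))^(2:ℝ) :=
            ENNReal.rpow_le_rpow (iInf₂_le _ hγ) (by norm_num)
      _ = cost γ := by rw [← ENNReal.rpow_mul]; norm_num
    calc ⨅ γ ∈ Coupling μ ν, (∫⁻ z, (edist z.1 z.2) ^ (2:ℝ) ∂γ) ^ (1/(2:ℝ))
        = ((⨅ γ ∈ Coupling μ ν, (cost γ) ^ ((1:ℝ)/2))^(2:ℝ))^((1:ℝ)/2) := by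
          rw [← ENNReal.rpow_mul, show (2:ℝ)*((1:ℝ)/2) = 1 by norm_num,
            ENNReal.rpow_one]
          simp only [cost]
    _ ≤ (⨅ γ ∈ Coupling μ ν, cost γ) ^ ((1:ℝ)/2) :=
          ENNReal.rpow_le_rpow h (by norm_num)
  · exact le_iInf₂ fun γ hγ => ENNReal.rpow_le_rpow (iInf₂_le _ hγ) (by norm_num)

lemma toReal_sq_wd (μ ν : Measure X) :
    ((wassersteinDist 2 μ ν).toReal)^2 = (A μ ν).toReal := by
  rw [wd_eq, ← Real.rpow_natCast ((A μ ν ^ ((1:ℝ)/2)).toReal) 2,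
    ENNReal.toReal_rpow, ← ENNReal.rpow_mul]
  norm_num

set_option maxHeartbeats 1000000 in
lemma key {ν μ₁ μ₂ : Measure X} [IsProbabilityMeasure ν] [IsProbabilityMeasure μ₁]
    [IsProbabilityMeasure μ₂] {π : Measure (X × X)} [IsProbabilityMeasure π]
    (hπ : π ∈ Coupling μ₁ μ₂) {l : ℝ} (hl0 : 0 ≤ l) (hl1 : l ≤ 1)
    {γ : Measure (X × X)}
    (hγ : γ ∈ Coupling (π.map (fun z : X × X => (1-l) • z.1 + l • z.2)) ν) :
    ENNReal.ofReal (1-l) * A μ₁ ν + ENNReal.ofReal l * A μ₂ ν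
      ≤ cost γ + ENNReal.ofReal (l*(1-l)) * cost π := by
  set T : X × X → X := fun z => (1-l) • z.1 + l • z.2 with hTdef
  have hT : Measurable T :=
    ((continuous_fst.const_smul (1-l)).add (continuous_snd.const_smul l)).measurable
  haveI : IsProbabilityMeasure (π.map T) := Measure.isProbabilityMeasure_map hT.aemeasurable
  haveI : IsProbabilityMeasure γ := coupling_isProb hγ
  set κ : Kernel X X := γ.condKernel with hκdef
  set m : Measure ((X × X) × X) := π ⊗ₘ (κ.comap T hT) with hmdef
  have hmfst : m.map Prod.fst = π := Measure.fst_compProd π _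
  have hmmap : m.map (Prod.map T id) = γ := by
    rw [hmdef, map_compProd_comap π hT κ]
    have h := Measure.disintegrate γ γ.condKernel
    rwa [show γ.fst = π.map T from hγ.1] at h
  have hf₁ : Measurable (fun p : (X × X) × X => (p.1.1, p.2)) :=
    (measurable_fst.fst).prodMk measurable_snd
  have hf₂ : Measurable (fun p : (X × X) × X => (p.1.2, p.2)) :=
    (measurable_fst.snd).prodMk measurable_snd
  have hsnd : m.map Prod.snd = ν := by
    rw [← hγ.2, ← hmmap, Measure.map_map measurable_snd (hT.prodMap measurable_id)]
    rfl
  have hγ₁ : m.map (fun p : (X × X) × X => (p.1.1, p.2)) ∈ Coupling μ₁ ν := by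
    constructor
    · rw [Measure.map_map measurable_fst hf₁]
      have : (Prod.fst ∘ fun p : (X × X) × X => (p.1.1, p.2))
          = Prod.fst ∘ (Prod.fst : (X × X) × X → X × X) := rfl
      rw [this, ← Measure.map_map measurable_fst measurable_fst, hmfst, hπ.1]
    · rw [Measure.map_map measurable_snd hf₁]
      exact hsnd
  have hγ₂ : m.map (fun p : (X × X) × X => (p.1.2, p.2)) ∈ Coupling μ₂ ν := by
    constructor
    · rw [Measure.map_map measurable_fst hf₂]
      have : (Prod.fst ∘ fun p : (X × X) × X => (p.1.2, p.2))
          = Prod.snd ∘ (Prod.fst : (X × X) × X → X × X) := rfl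
      rw [this, ← Measure.map_map measurable_snd measurable_fst, hmfst, hπ.2]
    · rw [Measure.map_map measurable_snd hf₂]
      exact hsnd
  have hA₁ : A μ₁ ν ≤ ∫⁻ p, edist p.1.1 p.2 ^ (2:ℝ) ∂m := by
    refine le_trans (iInf₂_le _ hγ₁) ?_
    rw [cost, lintegral_map measurable_cost_integrand hf₁]
  have hA₂ : A μ₂ ν ≤ ∫⁻ p, edist p.1.2 p.2 ^ (2:ℝ) ∂m := by
    refine le_trans (iInf₂_le _ hγ₂) ?_
    rw [cost, lintegral_map measurable_cost_integrand hf₂]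
  have hcγ : cost γ = ∫⁻ p, edist (T p.1) p.2 ^ (2:ℝ) ∂m := by
    rw [cost, ← hmmap, lintegral_map measurable_cost_integrand (hT.prodMap measurable_id)]
    exact lintegral_congr fun a => rfl
  have hcπ : cost π = ∫⁻ p, edist p.1.1 p.1.2 ^ (2:ℝ) ∂m := by
    rw [cost, ← hmfst, lintegral_map measurable_cost_integrand measurable_fst]
  have e₁ : Measurable (fun p : (X × X) × X => edist p.1.1 p.2 ^ (2:ℝ)) :=
    (measurable_fst.fst.edist measurable_snd).pow_const _
  have e₂ : Measurable (fun p : (X × X) × X => edist p.1.2 p.2 ^ (2:ℝ)) :=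
    (measurable_fst.snd.edist measurable_snd).pow_const _
  have eT : Measurable (fun p : (X × X) × X => edist (T p.1) p.2 ^ (2:ℝ)) :=
    ((hT.comp measurable_fst).edist measurable_snd).pow_const _
  calc ENNReal.ofReal (1-l) * A μ₁ ν + ENNReal.ofReal l * A μ₂ ν
      ≤ ENNReal.ofReal (1-l) * ∫⁻ p, edist p.1.1 p.2 ^ (2:ℝ) ∂m
        + ENNReal.ofReal l * ∫⁻ p, edist p.1.2 p.2 ^ (2:ℝ) ∂m := by gcongr
  _ = ∫⁻ p, (ENNReal.ofReal (1-l) * edist p.1.1 p.2 ^ (2:ℝ)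
        + ENNReal.ofReal l * edist p.1.2 p.2 ^ (2:ℝ)) ∂m := by
      rw [lintegral_add_left (e₁.const_mul _), lintegral_const_mul _ e₁,
        lintegral_const_mul _ e₂]
  _ = ∫⁻ p, (edist (T p.1) p.2 ^ (2:ℝ)
        + ENNReal.ofReal (l*(1-l)) * edist p.1.1 p.1.2 ^ (2:ℝ)) ∂m := by
      refine lintegral_congr fun p => ?_
      exact enn_identity hl0 hl1 p.1.1 p.1.2 p.2
  _ = cost γ + ENNReal.ofReal (l*(1-l)) * cost π := by
      rw [lintegral_add_left eT,
        lintegral_const_mul _ ((measurable_fst.fst.edist measurable_fst.snd).pow_const _),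
        hcγ, hcπ]

end StmtAux

open StmtAux ProbabilityTheory in
/-- Strong semiconcavity (with constant 1) of `μ ↦ W₂²(μ, ν)` along arbitrary
interpolating curves induced by transport plans. -/
theorem stmt6 {d : ℕ} (ν : MeasureTheory.Measure (EuclideanSpace ℝ (Fin d)))
    [IsProbabilityMeasure ν]
    (hν2 : ∫⁻ x, (‖x‖₊ : ℝ≥0∞) ^ (2 : ℝ) ∂ν ≠ ⊤)
    (K : Set (EuclideanSpace ℝ (Fin d))) (hK : IsCompact K)
    (μ₁ μ₂ : MeasureTheory.Measure (EuclideanSpace ℝ (Fin d)))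
    [IsProbabilityMeasure μ₁] [IsProbabilityMeasure μ₂]
    (h1 : μ₁ Kᶜ = 0) (h2 : μ₂ Kᶜ = 0)
    (π : MeasureTheory.Measure
      (EuclideanSpace ℝ (Fin d) × EuclideanSpace ℝ (Fin d)))
    [IsProbabilityMeasure π] (hπ : π ∈ Coupling μ₁ μ₂)
    (l : ℝ) (hl : l ∈ Icc (0 : ℝ) 1) :
    (1 - l) * ((wassersteinDist 2 μ₁ ν).toReal) ^ 2
      + l * ((wassersteinDist 2 μ₂ ν).toReal) ^ 2
      - ((wassersteinDist 2 (π.map (fun z => (1 - l) • z.1 + l • z.2)) ν).toReal) ^ 2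
      ≤ l * (1 - l) * ∫ z, ‖z.1 - z.2‖ ^ 2 ∂π := by
  obtain ⟨hl0, hl1⟩ := hl
  have hT : Measurable (fun z : EuclideanSpace ℝ (Fin d) × EuclideanSpace ℝ (Fin d) =>
      (1 - l) • z.1 + l • z.2) :=
    ((continuous_fst.const_smul (1-l)).add (continuous_snd.const_smul l)).measurable
  set μL := π.map (fun z => (1 - l) • z.1 + l • z.2) with hμL
  haveI : IsProbabilityMeasure μL := Measure.isProbabilityMeasure_map hT.aemeasurable
  obtain ⟨R, hR⟩ := hK.isBounded.subset_closedBall 0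
  set R₀ : ℝ := max R 0 with hR₀def
  have hR₀0 : 0 ≤ R₀ := le_max_right _ _
  have hKR : K ⊆ closedBall 0 R₀ := hR.trans (closedBall_subset_closedBall (le_max_left _ _))
  have hB : MeasurableSet (closedBall (0 : EuclideanSpace ℝ (Fin d)) R₀) :=
    measurableSet_closedBall
  have h1' : μ₁ (closedBall 0 R₀)ᶜ = 0 := measure_mono_null (compl_subset_compl.2 hKR) h1
  have h2' : μ₂ (closedBall 0 R₀)ᶜ = 0 := measure_mono_null (compl_subset_compl.2 hKR) h2
  have hm₁ := StmtAux.mom2_lt_top h1'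
  have hm₂ := StmtAux.mom2_lt_top h2'
  have hmν : StmtAux.mom2 ν < ⊤ := lt_top_iff_ne_top.2 hν2
  have hπB : π ((closedBall 0 R₀ ×ˢ closedBall 0 R₀ :
      Set (EuclideanSpace ℝ (Fin d) × EuclideanSpace ℝ (Fin d)))ᶜ) = 0 := by
    rw [Set.compl_prod_eq_union]
    refine measure_union_null ?_ ?_
    · rw [Set.prod_univ, ← Measure.map_apply measurable_fst hB.compl, hπ.1]; exact h1'
    · rw [Set.univ_prod, ← Measure.map_apply measurable_snd hB.compl, hπ.2]; exact h2'
  have hμLB : μL (closedBall 0 R₀)ᶜ = 0 := by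
    rw [hμL, Measure.map_apply hT hB.compl]
    refine measure_mono_null (fun z hz => ?_) hπB
    rw [mem_compl_iff, mem_prod]
    rintro ⟨hz1, hz2⟩
    refine (mem_compl_iff _ _).1 (Set.mem_preimage.1 hz) ?_
    rw [mem_closedBall_zero_iff]
    have b1 : ‖z.1‖ ≤ R₀ := mem_closedBall_zero_iff.1 hz1
    have b2 : ‖z.2‖ ≤ R₀ := mem_closedBall_zero_iff.1 hz2
    calc ‖(1-l) • z.1 + l • z.2‖ ≤ ‖(1-l) • z.1‖ + ‖l • z.2‖ := norm_add_le _ _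
    _ = |1-l| * ‖z.1‖ + |l| * ‖z.2‖ := by
        rw [norm_smul, norm_smul, Real.norm_eq_abs, Real.norm_eq_abs]
    _ ≤ (1-l) * R₀ + l * R₀ := by
        rw [abs_of_nonneg (by linarith), abs_of_nonneg hl0]
        have n1 := norm_nonneg z.1
        have n2 := norm_nonneg z.2
        nlinarith
    _ = R₀ := by ring
  have hmL := StmtAux.mom2_lt_top hμLB
  have hA₁ : StmtAux.A μ₁ ν < ⊤ := StmtAux.A_lt_top hm₁ hmν
  have hA₂ : StmtAux.A μ₂ ν < ⊤ := StmtAux.A_lt_top hm₂ hmν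
  have hAL : StmtAux.A μL ν < ⊤ := StmtAux.A_lt_top hmL hmν
  have hJ : StmtAux.cost π ≠ ⊤ :=
    (lt_of_le_of_lt (StmtAux.cost_le_mom π hπ) (ENNReal.add_lt_top.2
      ⟨ENNReal.mul_lt_top (by norm_num) hm₁, ENNReal.mul_lt_top (by norm_num) hm₂⟩)).ne
  have hstep : ENNReal.ofReal (1-l) * StmtAux.A μ₁ ν + ENNReal.ofReal l * StmtAux.A μ₂ ν
      ≤ StmtAux.A μL ν + ENNReal.ofReal (l*(1-l)) * StmtAux.cost π := by
    calc ENNReal.ofReal (1-l) * StmtAux.A μ₁ ν + ENNReal.ofReal l * StmtAux.A μ₂ ν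
        ≤ ⨅ (γ : Coupling μL ν),
            (StmtAux.cost γ.1 + ENNReal.ofReal (l*(1-l)) * StmtAux.cost π) :=
          le_iInf fun γ => StmtAux.key hπ hl0 hl1 γ.2
    _ = (⨅ (γ : Coupling μL ν), StmtAux.cost γ.1)
          + ENNReal.ofReal (l*(1-l)) * StmtAux.cost π := (ENNReal.iInf_add).symm
    _ = StmtAux.A μL ν + ENNReal.ofReal (l*(1-l)) * StmtAux.cost π := by
          rw [StmtAux.A, iInf_subtype']
  have hfin1 : ENNReal.ofReal (1-l) * StmtAux.A μ₁ ν ≠ ⊤ :=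
    ENNReal.mul_ne_top ENNReal.ofReal_ne_top hA₁.ne
  have hfin2 : ENNReal.ofReal l * StmtAux.A μ₂ ν ≠ ⊤ :=
    ENNReal.mul_ne_top ENNReal.ofReal_ne_top hA₂.ne
  have hfinJ : ENNReal.ofReal (l*(1-l)) * StmtAux.cost π ≠ ⊤ :=
    ENNReal.mul_ne_top ENNReal.ofReal_ne_top hJ
  have hreal := ENNReal.toReal_mono (ENNReal.add_ne_top.2 ⟨hAL.ne, hfinJ⟩) hstep
  rw [ENNReal.toReal_add hfin1 hfin2, ENNReal.toReal_add hAL.ne hfinJ,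
    ENNReal.toReal_mul, ENNReal.toReal_mul, ENNReal.toReal_mul,
    ENNReal.toReal_ofReal (by linarith : (0:ℝ) ≤ 1 - l), ENNReal.toReal_ofReal hl0,
    ENNReal.toReal_ofReal (mul_nonneg hl0 (by linarith))] at hreal
  have hI : ∫ z, ‖z.1 - z.2‖^2 ∂π = (StmtAux.cost π).toReal := by
    rw [integral_eq_lintegral_of_nonneg_ae (ae_of_all _ fun z => sq_nonneg _)
      (f := fun z : EuclideanSpace ℝ (Fin d) × EuclideanSpace ℝ (Fin d) => ‖z.1 - z.2‖^2)
      (Continuous.aestronglyMeasurable (by fun_prop))]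
    congr 1
    rw [StmtAux.cost]
    exact lintegral_congr fun z => (StmtAux.edist_sq z.1 z.2).symm
  rw [StmtAux.toReal_sq_wd μ₁ ν, StmtAux.toReal_sq_wd μ₂ ν, StmtAux.toReal_sq_wd μL ν, hI]
  linarith
end

section
/- Let φ : 𝒫_c(ℝ^d) → ℝ be locally strongly semiconcave, μ a compactly supported Borel probability measure on ℝ^d, and F ∈ L^∞(ℝ^d, ℝ^d; μ). Then the directional (Dini) derivative dφ(μ)(F) := lim_{ε→0⁺} [φ((Id + εF)_#μ) − φ(μ)]/ε exists in ℝ. Moreover, for 0 < ε₁ ≤ ε₂ ≤ 1 the difference quotients satisfy [φ((Id+ε₁F)_#μ) − φ(μ)]/ε₁ ≥ [φ((Id+ε₂F)_#μ) − φ(μ)]/ε₂ − C_K(ε₂−ε₁)‖F‖_{L²(μ)} for some constant C_K depending only on a compact set K containing the supports of all (Id+εF)_#μ for ε ∈ [0,1]. -/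
open MeasureTheory Metric Set Filter


private lemma aux_limit14 (q : ℝ → ℝ) (c B : ℝ) (hc : 0 ≤ c)
    (hmono : ∀ ε₁ ε₂ : ℝ, 0 < ε₁ → ε₁ ≤ ε₂ → ε₂ ≤ 1 → q ε₂ - c * (ε₂ - ε₁) ≤ q ε₁)
    (hub : ∀ ε : ℝ, 0 < ε → ε ≤ 1 → q ε ≤ B) :
    ∃ D : ℝ, Tendsto q (nhdsWithin 0 (Ioi 0)) (nhds D) := by
  set h : ℝ → ℝ := fun ε => q ε - c * ε with hhdef
  have hmono' : ∀ ε₁ ε₂ : ℝ, 0 < ε₁ → ε₁ ≤ ε₂ → ε₂ ≤ 1 → h ε₂ ≤ h ε₁ := by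
    intro ε₁ ε₂ h1 h12 h21
    have := hmono ε₁ ε₂ h1 h12 h21
    simp only [hhdef]
    linarith
  have hBB : ∀ ε : ℝ, 0 < ε → ε ≤ 1 → h ε ≤ B := by
    intro ε h0 h1
    have := hub ε h0 h1
    have h2 : 0 ≤ c * ε := mul_nonneg hc h0.le
    simp only [hhdef]
    linarith
  have hne : (h '' Ioc 0 1).Nonempty := ⟨h 1, ⟨1, ⟨one_pos, le_refl 1⟩, rfl⟩⟩
  have hbdd : BddAbove (h '' Ioc 0 1) := by
    refine ⟨B, ?_⟩
    rintro _ ⟨ε, hε, rfl⟩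
    exact hBB ε hε.1 hε.2
  refine ⟨sSup (h '' Ioc 0 1), ?_⟩
  have htends : Tendsto h (nhdsWithin 0 (Ioi 0)) (nhds (sSup (h '' Ioc 0 1))) := by
    rw [tendsto_order]
    constructor
    · intro b hb
      obtain ⟨_, ⟨ε₀, hε₀, rfl⟩, hbε₀⟩ := exists_lt_of_lt_csSup hne hb
      filter_upwards [Ioo_mem_nhdsGT_of_mem
        (show (0:ℝ) ∈ Ico (0:ℝ) ε₀ from ⟨le_refl 0, hε₀.1⟩)] with ε hε
      exact lt_of_lt_of_le hbε₀ (hmono' ε ε₀ hε.1 hε.2.le hε₀.2)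
    · intro b hb
      filter_upwards [Ioo_mem_nhdsGT_of_mem
        (show (0:ℝ) ∈ Ico (0:ℝ) 1 from ⟨le_refl 0, one_pos⟩)] with ε hε
      exact lt_of_le_of_lt (le_csSup hbdd ⟨ε, ⟨hε.1, hε.2.le⟩, rfl⟩) hb
  have hCI : Tendsto (fun ε : ℝ => c * ε) (nhdsWithin 0 (Ioi 0)) (nhds 0) := by
    have h0 : Tendsto (fun ε : ℝ => c * ε) (nhds 0) (nhds (c * 0)) :=
      (continuous_const.mul continuous_id).tendsto 0
    rw [mul_zero] at h0
    exact h0.mono_left nhdsWithin_le_nhds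
  have hfin := htends.add hCI
  rw [add_zero] at hfin
  refine hfin.congr fun ε => ?_
  simp only [hhdef]
  ring

/-- For a locally strongly semiconcave functional on measures, the one-sided directional
(Dini) derivative along a bounded vector field exists, and the difference quotients are
almost monotone. -/
theorem stmt14 {d : ℕ} (φ : MeasureTheory.Measure (EuclideanSpace ℝ (Fin d)) → ℝ)
    (hsc : ∀ R : ℝ, 0 < R → ∃ C : ℝ, 0 < C ∧
      ∀ μ₁ μ₂ : MeasureTheory.Measure (EuclideanSpace ℝ (Fin d)),
        IsProbabilityMeasure μ₁ → IsProbabilityMeasure μ₂ →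
        μ₁ (closedBall 0 R)ᶜ = 0 → μ₂ (closedBall 0 R)ᶜ = 0 →
        ∀ π : MeasureTheory.Measure
          (EuclideanSpace ℝ (Fin d) × EuclideanSpace ℝ (Fin d)),
          IsProbabilityMeasure π →
          π.map Prod.fst = μ₁ → π.map Prod.snd = μ₂ →
          ∀ l ∈ Icc (0 : ℝ) 1,
            (1 - l) * φ μ₁ + l * φ μ₂
              - φ (π.map (fun z => (1 - l) • z.1 + l • z.2))
              ≤ C * (l * (1 - l)) * ∫ z, ‖z.1 - z.2‖ ^ 2 ∂π)
    (μ : MeasureTheory.Measure (EuclideanSpace ℝ (Fin d))) [IsProbabilityMeasure μ]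
    (K : Set (EuclideanSpace ℝ (Fin d))) (hK : IsCompact K) (hμ : μ Kᶜ = 0)
    (F : EuclideanSpace ℝ (Fin d) → EuclideanSpace ℝ (Fin d))
    (hF : Measurable F) (M : ℝ) (hFb : ∀ x, ‖F x‖ ≤ M) :
    (∃ D : ℝ, Tendsto
      (fun ε : ℝ => (φ (μ.map (fun x => x + ε • F x)) - φ μ) / ε)
      (nhdsWithin 0 (Ioi 0)) (nhds D)) ∧
    (∃ C : ℝ, ∀ ε₁ ε₂ : ℝ, 0 < ε₁ → ε₁ ≤ ε₂ → ε₂ ≤ 1 →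
      (φ (μ.map (fun x => x + ε₁ • F x)) - φ μ) / ε₁ ≥
        (φ (μ.map (fun x => x + ε₂ • F x)) - φ μ) / ε₂
          - C * (ε₂ - ε₁) * Real.sqrt (∫ x, ‖F x‖ ^ 2 ∂μ)) := by
  have hM0 : (0:ℝ) ≤ M := le_trans (norm_nonneg _) (hFb 0)
  obtain ⟨R₀, hR₀⟩ := hK.isBounded.subset_closedBall 0
  set R : ℝ := |R₀| + M + 1 with hRdef
  have hRpos : 0 < R := by positivity
  obtain ⟨C, hC, hCsc⟩ := hsc R hRpos
  set I : ℝ := ∫ x, ‖F x‖ ^ 2 ∂μ with hIdef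
  have hInn : 0 ≤ I := integral_nonneg fun x => sq_nonneg _
  have hT : ∀ a : ℝ, Measurable (fun x : EuclideanSpace ℝ (Fin d) => x + a • F x) :=
    fun a => measurable_id.add (hF.const_smul a)
  have hprob : ∀ a : ℝ,
      IsProbabilityMeasure (μ.map (fun x : EuclideanSpace ℝ (Fin d) => x + a • F x)) :=
    fun a => Measure.isProbabilityMeasure_map (hT a).aemeasurable
  have hsupp : ∀ a : ℝ, |a| ≤ 1 →
      (μ.map (fun x : EuclideanSpace ℝ (Fin d) => x + a • F x))
        (closedBall (0 : EuclideanSpace ℝ (Fin d)) R)ᶜ = 0 := by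
    intro a ha
    rw [Measure.map_apply (hT a) measurableSet_closedBall.compl]
    refine measure_mono_null ?_ hμ
    intro x hx hxK
    apply hx
    simp only [mem_closedBall, dist_zero_right]
    have hx' : ‖x‖ ≤ R₀ := by
      simpa [mem_closedBall, dist_zero_right] using hR₀ hxK
    calc ‖x + a • F x‖ ≤ ‖x‖ + ‖a • F x‖ := norm_add_le _ _
      _ ≤ R₀ + 1 * M := by
          rw [norm_smul, Real.norm_eq_abs]
          exact add_le_add hx' (mul_le_mul ha (hFb x) (norm_nonneg _) zero_le_one)
      _ ≤ R := by
          have : R₀ ≤ |R₀| := le_abs_self _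
          rw [hRdef]; linarith
  have hmap0 : μ.map (fun x : EuclideanSpace ℝ (Fin d) => x + (0:ℝ) • F x) = μ := by
    simp only [zero_smul, add_zero]
    exact Measure.map_id
  -- key semiconcavity inequality along the interpolation
  have key : ∀ a b l c : ℝ, |a| ≤ 1 → |b| ≤ 1 → l ∈ Icc (0:ℝ) 1 → c = (1-l)*a + l*b →
      (1 - l) * φ (μ.map fun x => x + a • F x) + l * φ (μ.map fun x => x + b • F x)
        - φ (μ.map fun x => x + c • F x) ≤ C * (l * (1 - l)) * ((b - a)^2 * I) := by
    intro a b l c ha hb hl hc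
    have hpair : Measurable (fun x : EuclideanSpace ℝ (Fin d) =>
        (x + a • F x, x + b • F x)) := (hT a).prodMk (hT b)
    set π := μ.map (fun x : EuclideanSpace ℝ (Fin d) => (x + a • F x, x + b • F x)) with hπ
    have hπprob : IsProbabilityMeasure π := Measure.isProbabilityMeasure_map hpair.aemeasurable
    have hπ1 : π.map Prod.fst = μ.map (fun x => x + a • F x) := by
      rw [hπ, Measure.map_map measurable_fst hpair]; rfl
    have hπ2 : π.map Prod.snd = μ.map (fun x => x + b • F x) := by
      rw [hπ, Measure.map_map measurable_snd hpair]; rfl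
    have hmid : π.map (fun z : EuclideanSpace ℝ (Fin d) × EuclideanSpace ℝ (Fin d) =>
        (1-l) • z.1 + l • z.2) = μ.map (fun x => x + c • F x) := by
      have hm2 : Measurable (fun z : EuclideanSpace ℝ (Fin d) × EuclideanSpace ℝ (Fin d) =>
          (1-l) • z.1 + l • z.2) := by fun_prop
      rw [hπ, Measure.map_map hm2 hpair]
      congr 1
      funext x
      show (1-l) • (x + a • F x) + l • (x + b • F x) = x + c • F x
      rw [hc]
      module
    have hint : ∫ z, ‖z.1 - z.2‖ ^ 2 ∂π = (b-a)^2 * I := by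
      rw [hπ, integral_map (f := fun z : EuclideanSpace ℝ (Fin d) × EuclideanSpace ℝ (Fin d) =>
          ‖z.1 - z.2‖ ^ 2) hpair.aemeasurable
        ((continuous_fst.sub continuous_snd).norm.pow 2).aestronglyMeasurable]
      have heq : ∀ x : EuclideanSpace ℝ (Fin d),
          ‖(x + a • F x) - (x + b • F x)‖ ^ 2 = (b-a)^2 * ‖F x‖ ^ 2 := by
        intro x
        have h1 : (x + a • F x) - (x + b • F x) = (a - b) • F x := by module
        rw [h1, norm_smul, Real.norm_eq_abs, mul_pow, sq_abs]
        ring_nf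
      simp only [heq]
      rw [hIdef, integral_const_mul]
    have := hCsc (μ.map fun x => x + a • F x) (μ.map fun x => x + b • F x)
      (hprob a) (hprob b) (hsupp a ha) (hsupp b hb) π hπprob hπ1 hπ2 l hl
    rw [hmid, hint] at this
    exact this
  -- upper bound on the difference quotients
  set B : ℝ := φ μ - φ (μ.map fun x => x + (-1:ℝ) • F x) + 2*C*I with hBdef
  have hub : ∀ ε : ℝ, 0 < ε → ε ≤ 1 →
      (φ (μ.map fun x => x + ε • F x) - φ μ) / ε ≤ B := by
    intro ε hε hε1
    have h1 : (0:ℝ) < 1 + ε := by linarith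
    have hl : (1:ℝ)/(1+ε) ∈ Icc (0:ℝ) 1 :=
      ⟨by positivity, by rw [div_le_one h1]; linarith⟩
    have hc : (0:ℝ) = (1 - 1/(1+ε))*(-1) + (1/(1+ε))*ε := by field_simp; ring
    have hkey := key (-1) ε (1/(1+ε)) 0 (by norm_num)
      (by rw [abs_of_pos hε]; exact hε1) hl hc
    rw [hmap0] at hkey
    have hR2 : C * ((1/(1+ε)) * (1 - 1/(1+ε))) * ((ε - (-1))^2 * I) = C * ε * I := by
      field_simp
      ring
    rw [hR2] at hkey
    have h2 := mul_le_mul_of_nonneg_left hkey h1.le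
    have h5 : (1+ε) * ((1 - 1/(1+ε)) * φ (μ.map fun x => x + (-1:ℝ) • F x)
        + (1/(1+ε)) * φ (μ.map fun x => x + ε • F x) - φ μ)
        = ε * φ (μ.map fun x => x + (-1:ℝ) • F x)
          + φ (μ.map fun x => x + ε • F x) - (1+ε) * φ μ := by
      field_simp; ring
    rw [h5] at h2
    rw [div_le_iff₀ hε, hBdef]
    nlinarith [mul_nonneg (mul_nonneg (mul_nonneg (sub_nonneg.2 hε1) hC.le) hε.le) hInn]
  -- almost-monotonicity of the difference quotients
  have qmono : ∀ ε₁ ε₂ : ℝ, 0 < ε₁ → ε₁ ≤ ε₂ → ε₂ ≤ 1 →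
      (φ (μ.map fun x => x + ε₂ • F x) - φ μ) / ε₂ - C * I * (ε₂ - ε₁) ≤
      (φ (μ.map fun x => x + ε₁ • F x) - φ μ) / ε₁ := by
    intro ε₁ ε₂ h1 h12 h21
    have hε₂ : 0 < ε₂ := lt_of_lt_of_le h1 h12
    have hlI : ε₁/ε₂ ∈ Icc (0:ℝ) 1 := ⟨by positivity, div_le_one_of_le₀ h12 hε₂.le⟩
    have hc : ε₁ = (1 - ε₁/ε₂)*0 + (ε₁/ε₂)*ε₂ := by field_simp; ring
    have hkey := key 0 ε₂ (ε₁/ε₂) ε₁ (by norm_num)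
      (by rw [abs_of_pos hε₂]; exact h21) hlI hc
    rw [hmap0] at hkey
    have hRr : C * ((ε₁/ε₂) * (1 - ε₁/ε₂)) * ((ε₂ - 0)^2 * I)
        = C * (ε₁*(ε₂-ε₁)) * I := by
      field_simp
      ring
    rw [hRr] at hkey
    have h2 := mul_le_mul_of_nonneg_left hkey hε₂.le
    have h5 : ε₂ * ((1 - ε₁/ε₂) * φ μ + (ε₁/ε₂) * φ (μ.map fun x => x + ε₂ • F x)
        - φ (μ.map fun x => x + ε₁ • F x))
        = (ε₂ - ε₁) * φ μ + ε₁ * φ (μ.map fun x => x + ε₂ • F x)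
          - ε₂ * φ (μ.map fun x => x + ε₁ • F x) := by
      field_simp
    rw [h5] at h2
    rw [sub_le_iff_le_add]
    have heq : (φ (μ.map fun x => x + ε₁ • F x) - φ μ) / ε₁ + C * I * (ε₂ - ε₁)
        = ((φ (μ.map fun x => x + ε₁ • F x) - φ μ) + C * I * (ε₂ - ε₁) * ε₁) / ε₁ := by
      field_simp
    rw [heq, div_le_div_iff₀ hε₂ h1]
    nlinarith [h2]
  constructor
  · -- existence of the limit
    exact aux_limit14 (fun ε => (φ (μ.map fun x => x + ε • F x) - φ μ) / ε) (C*I) B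
      (mul_nonneg hC.le hInn) qmono hub
  · -- almost-monotonicity with √I
    refine ⟨C * Real.sqrt I, ?_⟩
    intro ε₁ ε₂ h1 h12 h21
    have hs : Real.sqrt I * Real.sqrt I = I := Real.mul_self_sqrt hInn
    have hrw : C * Real.sqrt I * (ε₂ - ε₁) * Real.sqrt I = C * I * (ε₂ - ε₁) := by
      linear_combination (C*(ε₂ - ε₁)) * hs
    have := qmono ε₁ ε₂ h1 h12 h21
    rw [ge_iff_le, hrw]
    exact this
end

section
/- Let H : [0,T] × ℝ^d → ℝ^d be measurable in t, C¹ in x, with |H(t,0)| + Lip(D_x H(t,·); K) ≤ C_K(t) for some C_K ∈ L¹([0,T],ℝ₊) and every closed ball K = B̄(0,R). Define the convolution-type non-local field v(t,μ,x) := ∫ H(t, x − z) dμ(z). Then for a.e. t ∈ [0,T], all μ₁, μ₂ ∈ 𝒫(K), all couplings 𝛍 ∈ Γ(μ₁,μ₂), all x, y ∈ K and all λ ∈ [0,1], |(1-λ)v(t,μ₁,x) + λv(t,μ₂,y) − v(t, 𝛍^{1→2}_λ, (1-λ)x + λy)| ≤ 2C_K(t)·λ(1-λ)·(|x−y|² +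 ∫|z₁−z₂|² d𝛍(z₁,z₂)), where 𝛍^{1→2}_λ := ((1-λ)π¹ + λπ²)_#𝛍. -/
open MeasureTheory Metric Set

section aux

variable {E F : Type*} [NormedAddCommGroup E] [NormedSpace ℝ E]
  [NormedAddCommGroup F] [NormedSpace ℝ F]

lemma taylor_aux {f : E → F} (hf : ContDiff ℝ 1 f) {s : Set E} (hsc : Convex ℝ s)
    {C : ℝ} (hC0 : 0 ≤ C)
    (hC : ∀ a ∈ s, ∀ b ∈ s, ‖fderiv ℝ f a - fderiv ℝ f b‖ ≤ C * ‖a - b‖)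
    {m a : E} (hm : m ∈ s) (ha : a ∈ s) :
    ‖f a - f m - fderiv ℝ f m (a - m)‖ ≤ C * ‖a - m‖ ^ 2 := by
  set g : E → F := fun z => f z - fderiv ℝ f m z with hg
  set s' : Set E := s ∩ closedBall m ‖a - m‖ with hs'
  have hconv : Convex ℝ s' := hsc.inter (convex_closedBall _ _)
  have hms' : m ∈ s' := ⟨hm, mem_closedBall_self (norm_nonneg _)⟩
  have has' : a ∈ s' := ⟨ha, by simp [dist_eq_norm]⟩
  have hder : ∀ z ∈ s', HasFDerivWithinAt g (fderiv ℝ f z - fderiv ℝ f m) s' z := by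
    intro z hz
    exact (((hf.differentiable one_ne_zero z).hasFDerivAt).sub
      ((fderiv ℝ f m).hasFDerivAt)).hasFDerivWithinAt
  have hbound : ∀ z ∈ s', ‖fderiv ℝ f z - fderiv ℝ f m‖ ≤ C * ‖a - m‖ := by
    intro z hz
    calc ‖fderiv ℝ f z - fderiv ℝ f m‖ ≤ C * ‖z - m‖ := hC z hz.1 m hm
    _ ≤ C * ‖a - m‖ :=
        mul_le_mul_of_nonneg_left (by simpa [dist_eq_norm] using hz.2) hC0
  have := hconv.norm_image_sub_le_of_norm_hasFDerivWithin_le hder hbound hms' has'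
  have hga : g a - g m = f a - f m - fderiv ℝ f m (a - m) := by
    simp [g, map_sub]; abel
  calc ‖f a - f m - fderiv ℝ f m (a - m)‖ = ‖g a - g m‖ := by rw [hga]
  _ ≤ C * ‖a - m‖ * ‖a - m‖ := this
  _ = C * ‖a - m‖ ^ 2 := by ring

lemma semiconcave_aux {f : E → F} (hf : ContDiff ℝ 1 f) {s : Set E} (hsc : Convex ℝ s)
    {C : ℝ} (hC0 : 0 ≤ C)
    (hC : ∀ a ∈ s, ∀ b ∈ s, ‖fderiv ℝ f a - fderiv ℝ f b‖ ≤ C * ‖a - b‖)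
    {a b : E} (ha : a ∈ s) (hb : b ∈ s) {l : ℝ} (hl0 : 0 ≤ l) (hl1 : l ≤ 1) :
    ‖(1 - l) • f a + l • f b - f ((1 - l) • a + l • b)‖
      ≤ C * (l * (1 - l)) * ‖a - b‖ ^ 2 := by
  set m : E := (1 - l) • a + l • b with hm
  have hms : m ∈ s := hsc ha hb (by linarith) hl0 (by ring)
  have hTa := taylor_aux hf hsc hC0 hC hms ha
  have hTb := taylor_aux hf hsc hC0 hC hms hb
  have ham : a - m = l • (a - b) := by simp only [hm]; module
  have hbm : b - m = (1 - l) • (b - a) := by simp only [hm]; module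
  have h0 : (1 - l) • (a - m) + l • (b - m) = 0 := by simp only [hm]; module
  have h1 : (1 - l) • (fderiv ℝ f m (a - m)) + l • (fderiv ℝ f m (b - m)) = 0 := by
    rw [← (fderiv ℝ f m).map_smul, ← (fderiv ℝ f m).map_smul, ← map_add, h0, map_zero]
  have hkey : (1 - l) • f a + l • f b - f m
      = (1 - l) • (f a - f m - fderiv ℝ f m (a - m))
        + l • (f b - f m - fderiv ℝ f m (b - m)) := by
    have h2 : (1 - l) • (f a - f m - fderiv ℝ f m (a - m))
        + l • (f b - f m - fderiv ℝ f m (b - m))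
        = (1 - l) • f a + l • f b - f m
          - ((1 - l) • (fderiv ℝ f m (a - m)) + l • (fderiv ℝ f m (b - m))) := by
      module
    rw [h2, h1, sub_zero]
  rw [hkey]
  have hna : ‖a - m‖ = l * ‖a - b‖ := by
    rw [ham, norm_smul, Real.norm_eq_abs, abs_of_nonneg hl0]
  have hnb : ‖b - m‖ = (1 - l) * ‖a - b‖ := by
    rw [hbm, norm_smul, Real.norm_eq_abs, abs_of_nonneg (by linarith : (0:ℝ) ≤ 1 - l),
      norm_sub_rev]
  calc ‖(1 - l) • (f a - f m - fderiv ℝ f m (a - m))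
        + l • (f b - f m - fderiv ℝ f m (b - m))‖
      ≤ (1 - l) * ‖f a - f m - fderiv ℝ f m (a - m)‖
        + l * ‖f b - f m - fderiv ℝ f m (b - m)‖ := by
        refine (norm_add_le _ _).trans ?_
        rw [norm_smul, norm_smul, Real.norm_eq_abs, Real.norm_eq_abs,
          abs_of_nonneg hl0, abs_of_nonneg (by linarith : (0:ℝ) ≤ 1 - l)]
  _ ≤ (1 - l) * (C * ‖a - m‖ ^ 2) + l * (C * ‖b - m‖ ^ 2) := by
      gcongr <;> linarith
  _ = C * (l * (1 - l)) * ‖a - b‖ ^ 2 := by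
      rw [hna, hnb]; ring

end aux

/-- Norm-semiconcavity along interpolating plans of a convolution-type non-local
velocity field `v(t,μ,x) = ∫ H(t, x - z) dμ(z)`. -/
theorem stmt16 {d : ℕ} (T R : ℝ) (hR : 0 < R)
    (H : ℝ → EuclideanSpace ℝ (Fin d) → EuclideanSpace ℝ (Fin d))
    (CK : ℝ → ℝ) (t : ℝ) (ht : t ∈ Icc 0 T)
    (hH : ContDiff ℝ 1 (H t)) (hCK : 0 ≤ CK t)
    (hlip : ∀ a ∈ closedBall (0 : EuclideanSpace ℝ (Fin d)) (2 * R),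
      ∀ b ∈ closedBall (0 : EuclideanSpace ℝ (Fin d)) (2 * R),
        ‖fderiv ℝ (H t) a - fderiv ℝ (H t) b‖ ≤ CK t * ‖a - b‖)
    (μ₁ μ₂ : MeasureTheory.Measure (EuclideanSpace ℝ (Fin d)))
    [IsProbabilityMeasure μ₁] [IsProbabilityMeasure μ₂]
    (h1 : μ₁ (closedBall 0 R)ᶜ = 0) (h2 : μ₂ (closedBall 0 R)ᶜ = 0)
    (π : MeasureTheory.Measure
      (EuclideanSpace ℝ (Fin d) × EuclideanSpace ℝ (Fin d)))
    [IsProbabilityMeasure π]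
    (hf : π.map Prod.fst = μ₁) (hs : π.map Prod.snd = μ₂)
    (x y : EuclideanSpace ℝ (Fin d))
    (hx : x ∈ closedBall (0 : EuclideanSpace ℝ (Fin d)) R)
    (hy : y ∈ closedBall (0 : EuclideanSpace ℝ (Fin d)) R)
    (l : ℝ) (hl : l ∈ Icc (0 : ℝ) 1) :
    ‖(1 - l) • (∫ z, H t (x - z) ∂μ₁) + l • (∫ z, H t (y - z) ∂μ₂)
        - ∫ z, H t ((1 - l) • x + l • y - z)
            ∂(π.map (fun q => (1 - l) • q.1 + l • q.2))‖
      ≤ 2 * CK t * (l * (1 - l)) * (‖x - y‖ ^ 2 + ∫ q, ‖q.1 - q.2‖ ^ 2 ∂π) := by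
  obtain ⟨hl0, hl1⟩ := hl
  have hB : MeasurableSet (closedBall (0 : (EuclideanSpace ℝ (Fin d))) R) := measurableSet_closedBall
  -- a.e. membership of marginals in the ball
  have hae1 : ∀ᵐ q ∂π, q.1 ∈ closedBall (0 : (EuclideanSpace ℝ (Fin d))) R := by
    rw [ae_iff]
    have : {q : (EuclideanSpace ℝ (Fin d)) × (EuclideanSpace ℝ (Fin d)) | ¬ q.1 ∈ closedBall (0 : (EuclideanSpace ℝ (Fin d))) R}
        = Prod.fst ⁻¹' (closedBall (0 : (EuclideanSpace ℝ (Fin d))) R)ᶜ := rfl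
    rw [this, ← Measure.map_apply measurable_fst hB.compl, hf, h1]
  have hae2 : ∀ᵐ q ∂π, q.2 ∈ closedBall (0 : (EuclideanSpace ℝ (Fin d))) R := by
    rw [ae_iff]
    have : {q : (EuclideanSpace ℝ (Fin d)) × (EuclideanSpace ℝ (Fin d)) | ¬ q.2 ∈ closedBall (0 : (EuclideanSpace ℝ (Fin d))) R}
        = Prod.snd ⁻¹' (closedBall (0 : (EuclideanSpace ℝ (Fin d))) R)ᶜ := rfl
    rw [this, ← Measure.map_apply measurable_snd hB.compl, hs, h2]
  -- the continuous functions involved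
  have hHc : Continuous (H t) := hH.continuous
  obtain ⟨M, hM⟩ := (isCompact_closedBall (0 : (EuclideanSpace ℝ (Fin d))) (2 * R)).exists_bound_of_continuousOn
    hHc.continuousOn
  -- helper: integrability of q ↦ H t (g q) when g is continuous and a.e. in the big ball
  have hint : ∀ g : (EuclideanSpace ℝ (Fin d)) × (EuclideanSpace ℝ (Fin d)) → (EuclideanSpace ℝ (Fin d)), Continuous g →
      (∀ᵐ q ∂π, g q ∈ closedBall (0 : (EuclideanSpace ℝ (Fin d))) (2 * R)) →
      Integrable (fun q => H t (g q)) π := by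
    intro g hg hgae
    refine Integrable.mono' (integrable_const M) ((hHc.comp hg).aestronglyMeasurable) ?_
    filter_upwards [hgae] with q hq using hM _ hq
  have hball : ∀ {a b : (EuclideanSpace ℝ (Fin d))}, a ∈ closedBall (0 : (EuclideanSpace ℝ (Fin d))) R → b ∈ closedBall (0 : (EuclideanSpace ℝ (Fin d))) R →
      a - b ∈ closedBall (0 : (EuclideanSpace ℝ (Fin d))) (2 * R) := by
    intro a b ha hb
    rw [mem_closedBall, dist_zero_right] at *
    calc ‖a - b‖ ≤ ‖a‖ + ‖b‖ := norm_sub_le _ _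
    _ ≤ 2 * R := by linarith
  have hconv2R : Convex ℝ (closedBall (0 : (EuclideanSpace ℝ (Fin d))) (2 * R)) := convex_closedBall _ _
  have hae1' : ∀ᵐ q ∂π, x - q.1 ∈ closedBall (0 : (EuclideanSpace ℝ (Fin d))) (2 * R) := by
    filter_upwards [hae1] with q hq using hball hx hq
  have hae2' : ∀ᵐ q ∂π, y - q.2 ∈ closedBall (0 : (EuclideanSpace ℝ (Fin d))) (2 * R) := by
    filter_upwards [hae2] with q hq using hball hy hq
  have hae3' : ∀ᵐ q ∂π,
      (1 - l) • (x - q.1) + l • (y - q.2) ∈ closedBall (0 : (EuclideanSpace ℝ (Fin d))) (2 * R) := by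
    filter_upwards [hae1', hae2'] with q h1 h2
    exact hconv2R h1 h2 (by linarith) hl0 (by ring)
  have hi1 : Integrable (fun q : (EuclideanSpace ℝ (Fin d)) × (EuclideanSpace ℝ (Fin d)) => H t (x - q.1)) π :=
    hint _ (continuous_const.sub continuous_fst) hae1'
  have hi2 : Integrable (fun q : (EuclideanSpace ℝ (Fin d)) × (EuclideanSpace ℝ (Fin d)) => H t (y - q.2)) π :=
    hint _ (continuous_const.sub continuous_snd) hae2'
  have hi3 : Integrable (fun q : (EuclideanSpace ℝ (Fin d)) × (EuclideanSpace ℝ (Fin d)) => H t ((1 - l) • (x - q.1) + l • (y - q.2))) π :=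
    hint _ (by fun_prop) hae3'
  -- rewrite the three integrals as integrals over π
  have hc1 : Continuous fun z : EuclideanSpace ℝ (Fin d) => H t (x - z) :=
    hHc.comp (continuous_const.sub continuous_id)
  have hc2 : Continuous fun z : EuclideanSpace ℝ (Fin d) => H t (y - z) :=
    hHc.comp (continuous_const.sub continuous_id)
  have hc3 : Continuous fun z : EuclideanSpace ℝ (Fin d) =>
      H t ((1 - l) • x + l • y - z) :=
    hHc.comp (continuous_const.sub continuous_id)
  have e1 : (∫ z, H t (x - z) ∂μ₁) = ∫ q, H t (x - q.1) ∂π := by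
    rw [← hf, integral_map measurable_fst.aemeasurable hc1.aestronglyMeasurable]
  have e2 : (∫ z, H t (y - z) ∂μ₂) = ∫ q, H t (y - q.2) ∂π := by
    rw [← hs, integral_map measurable_snd.aemeasurable hc2.aestronglyMeasurable]
  have e3 : (∫ z, H t ((1 - l) • x + l • y - z)
        ∂(π.map (fun q => (1 - l) • q.1 + l • q.2)))
      = ∫ q, H t ((1 - l) • (x - q.1) + l • (y - q.2)) ∂π := by
    rw [integral_map ((by fun_prop : Continuous fun q : EuclideanSpace ℝ (Fin d) × EuclideanSpace ℝ (Fin d) =>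
        (1 - l) • q.1 + l • q.2).aemeasurable) hc3.aestronglyMeasurable]
    congr 1
    funext q
    exact congrArg (H t) (by module)
  rw [e1, e2, e3]
  -- combine into a single integral
  have hiF1 : Integrable (fun q : EuclideanSpace ℝ (Fin d) × EuclideanSpace ℝ (Fin d) =>
      (1 - l) • H t (x - q.1)) π := hi1.smul ((1:ℝ) - l)
  have hiF2 : Integrable (fun q : EuclideanSpace ℝ (Fin d) × EuclideanSpace ℝ (Fin d) =>
      l • H t (y - q.2)) π := hi2.smul l
  have hiF12 : Integrable (fun q : EuclideanSpace ℝ (Fin d) × EuclideanSpace ℝ (Fin d) =>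
      (1 - l) • H t (x - q.1) + l • H t (y - q.2)) π := hiF1.add hiF2
  rw [← integral_smul, ← integral_smul, ← integral_add hiF1 hiF2,
    ← integral_sub hiF12 hi3]
  -- pointwise bound
  set G : (EuclideanSpace ℝ (Fin d)) × (EuclideanSpace ℝ (Fin d)) → ℝ :=
    fun q => 2 * CK t * (l * (1 - l)) * (‖x - y‖ ^ 2 + ‖q.1 - q.2‖ ^ 2) with hG
  have hsqint : Integrable (fun q : (EuclideanSpace ℝ (Fin d)) × (EuclideanSpace ℝ (Fin d)) => ‖q.1 - q.2‖ ^ 2) π := by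
    refine Integrable.mono' (integrable_const ((2 * R) ^ 2))
      (((continuous_fst.sub continuous_snd).norm.pow 2).aestronglyMeasurable) ?_
    filter_upwards [hae1, hae2] with q hq1 hq2
    rw [Real.norm_eq_abs, abs_of_nonneg (by positivity)]
    have := hball hq1 hq2
    rw [mem_closedBall, dist_zero_right] at this
    nlinarith [norm_nonneg (q.1 - q.2)]
  have hGint : Integrable G π := by
    exact ((integrable_const (‖x - y‖ ^ 2)).add hsqint).const_mul _
  have hptw : ∀ᵐ q ∂π,
      ‖(1 - l) • H t (x - q.1) + l • H t (y - q.2)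
        - H t ((1 - l) • (x - q.1) + l • (y - q.2))‖ ≤ G q := by
    filter_upwards [hae1', hae2'] with q hq1 hq2
    have hsc := semiconcave_aux hH hconv2R hCK hlip hq1 hq2 hl0 hl1
    refine hsc.trans ?_
    have hd : (x - q.1) - (y - q.2) = (x - y) - (q.1 - q.2) := by module
    have hn2 : ‖(x - q.1) - (y - q.2)‖ ^ 2 ≤ 2 * (‖x - y‖ ^ 2 + ‖q.1 - q.2‖ ^ 2) := by
      rw [hd]
      have h := norm_sub_le (x - y) (q.1 - q.2)
      nlinarith [h, sq_nonneg (‖x - y‖ - ‖q.1 - q.2‖), norm_nonneg ((x - y) - (q.1 - q.2)),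
        norm_nonneg (x - y), norm_nonneg (q.1 - q.2)]
    calc CK t * (l * (1 - l)) * ‖(x - q.1) - (y - q.2)‖ ^ 2
        ≤ CK t * (l * (1 - l)) * (2 * (‖x - y‖ ^ 2 + ‖q.1 - q.2‖ ^ 2)) := by
          apply mul_le_mul_of_nonneg_left hn2
          have : 0 ≤ l * (1 - l) := mul_nonneg hl0 (by linarith)
          positivity
    _ = G q := by simp only [hG]; ring
  refine (norm_integral_le_of_norm_le hGint hptw).trans ?_
  rw [hG]
  rw [MeasureTheory.integral_const_mul, integral_add (integrable_const _) hsqint, integral_const]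
  simp [measure_univ]
end
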